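/- For any integer i: Θ(x;q)/(1 - xq^i) = f_{1,1,1}(q x^{-1}, q^{i+1}; q), where f_{1,1,1}(X,Y;q) = Σ_{r,s∈ℤ} sg(r,s) (-1)^{r+s} X^r Y^s q^{r(r-1)/2 + rs + s(s-1)/2}, Θ(x;q) = (x;q)_∞(q/x;q)_∞(q;q)_∞, valid for |q|<1 and x not an integral power of q. -/

import Mathlib

def sg (r : ℤ) : ℤ := if 0 ≤ r then 1 else -1

/-- `sg(r,s) = (sg(r)+sg(s))/2`, as a complex number. -/
noncomputable def sg2 (r s : ℤ) : ℂ := ((sg r + sg s : ℤ) : ℂ) / 2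

/-- The infinite q-Pochhammer symbol `(a;q)_∞ = ∏_{k≥0} (1 - a qᵏ)`. -/
noncomputable def qPoch (a q : ℂ) : ℂ := ∏' k : ℕ, (1 - a * q ^ k)

/-- The Jacobi theta function `Θ(x;q) = (x;q)_∞ (q/x;q)_∞ (q;q)_∞`. -/
noncomputable def Theta (x q : ℂ) : ℂ := qPoch x q * qPoch (q / x) q * qPoch q q

/-- The Hecke-type double sum `f_{a,b,c}(X,Y;q)`. -/
noncomputable def heckeF (a b c : ℤ) (X Y q : ℂ) : ℂ :=
  ∑' p : ℤ × ℤ, sg2 p.1 p.2 * (-1 : ℂ) ^ (p.1 + p.2) * X ^ p.1 * Y ^ p.2 *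
    q ^ (a * (p.1 * (p.1 - 1) / 2) + b * p.1 * p.2 + c * (p.2 * (p.2 - 1) / 2))

open Finset Filter Topology

-- ===== from p1.lean =====


/-- `m*(m-1)` is even, with exact division facts. -/
lemma hf_half (m : ℤ) : 2 * (m * (m - 1) / 2) = m * (m - 1) := by
  obtain ⟨k, hk⟩ := Int.even_mul_succ_self (m - 1)
  have h : m * (m - 1) = 2 * k := by linear_combination hk
  rw [h]
  omega

lemma hf_exists (m : ℤ) : ∃ k : ℤ, m * (m - 1) = 2 * k ∧ m * (m - 1) / 2 = k := by
  refine ⟨m * (m - 1) / 2, (hf_half m).symm, rfl⟩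

/-- the key combination `C(r,2)+rs+C(s,2) = C(r+s,2)`. -/
lemma hf_add (r s : ℤ) :
    1 * (r * (r - 1) / 2) + 1 * r * s + 1 * (s * (s - 1) / 2)
      = (r + s) * ((r + s) - 1) / 2 := by
  obtain ⟨a, ha, ha'⟩ := hf_exists r
  obtain ⟨b, hb, hb'⟩ := hf_exists s
  obtain ⟨c, hc, hc'⟩ := hf_exists (r + s)
  rw [ha', hb', hc']
  have : 2 * c = 2 * a + 2 * (r * s) + 2 * b := by linear_combination ha + hb - hc
  linarith

/-- master summability lemma over ℕ -/
lemma master_gen {ρ R : ℝ} (h0 : 0 < ρ) (h1 : ρ < 1) (hR : 0 ≤ R) (c : ℤ) (g : ℕ → ℤ)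
    (hg : ∀ n : ℕ, (n : ℤ) - c ≤ g (n + 1) - g n) :
    Summable (fun n : ℕ => ((n : ℝ) + 1) * ρ ^ g n * R ^ n) := by
  apply summable_of_ratio_norm_eventually_le (r := 1/2) (by norm_num)
  have hten : Tendsto (fun n : ℕ => ρ ^ ((n : ℤ) - c) * R) atTop (𝓝 0) := by
    have h := (tendsto_pow_atTop_nhds_zero_of_lt_one h0.le h1).mul_const (ρ ^ (-c : ℤ) * R)
    simp only [zero_mul] at h
    apply h.congr
    intro n
    rw [zpow_sub₀ h0.ne', zpow_natCast, zpow_neg]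
    field_simp
  filter_upwards [hten.eventually (eventually_le_nhds (by norm_num : (0:ℝ) < 1/4))] with n hn
  have hA : (0:ℝ) < ρ ^ g n := zpow_pos h0 _
  have hB : (0:ℝ) ≤ R ^ n := pow_nonneg hR n
  have key : ρ ^ g (n + 1) ≤ ρ ^ g n * ρ ^ ((n : ℤ) - c) := by
    rw [← zpow_add₀ h0.ne']
    exact zpow_le_zpow_right_of_le_one₀ h0 h1.le (by linarith [hg n])
  have hnn : (0:ℝ) ≤ ρ ^ ((n:ℤ) - c) := (zpow_pos h0 _).le
  rw [Real.norm_eq_abs, Real.norm_eq_abs, abs_of_nonneg (by positivity),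
    abs_of_nonneg (by positivity)]
  have e1 : ((n + 1 : ℕ) : ℝ) + 1 = (n : ℝ) + 2 := by push_cast; ring
  rw [e1, pow_succ]
  calc ((n:ℝ) + 2) * ρ ^ g (n+1) * (R ^ n * R)
      ≤ ((n:ℝ) + 2) * (ρ ^ g n * ρ ^ ((n:ℤ) - c)) * (R ^ n * R) := by
        gcongr
    _ = (ρ ^ ((n:ℤ) - c) * R) * (((n:ℝ) + 2) * ρ ^ g n * R ^ n) := by ring
    _ ≤ (1/4) * (((n:ℝ) + 2) * ρ ^ g n * R ^ n) := by
        apply mul_le_mul_of_nonneg_right hn (by positivity)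
    _ ≤ (1/2) * (((n:ℝ) + 1) * ρ ^ g n * R ^ n) := by nlinarith [hA, hB, mul_nonneg hA.le hB]

-- ===== from p2.lean =====
lemma master_int {ρ R : ℝ} (h0 : 0 < ρ) (h1 : ρ < 1) (hR : 0 ≤ R) (α : ℤ) :
    Summable (fun m : ℤ =>
      ((m.natAbs : ℝ) + 1) * ρ ^ (m * (m - 1) / 2 + α * m) * R ^ m.natAbs) := by
  apply Summable.of_nat_of_neg
  · apply (master_gen h0 h1 hR (|α| + 1)
      (fun n => (n : ℤ) * ((n : ℤ) - 1) / 2 + α * n) ?_).congr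
    · intro n; simp
    · intro n
      have e1 := hf_half (n : ℤ)
      have e2 := hf_half ((n : ℤ) + 1)
      have e3 : ((n:ℤ)+1) * (((n:ℤ)+1) - 1) = (n:ℤ) * ((n:ℤ)-1) + 2 * n := by ring
      have e4 : -|α| ≤ α := neg_abs_le α
      push_cast
      linarith
  · apply (master_gen h0 h1 hR (|α| + 1)
      (fun n => (-(n : ℤ)) * ((-(n : ℤ)) - 1) / 2 + α * (-(n : ℤ))) ?_).congr
    · intro n; simp
    · intro n
      have e1 := hf_half (-(n : ℤ))
      have e2 := hf_half (-((n : ℤ) + 1))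
      have e3 : (-((n:ℤ)+1)) * ((-((n:ℤ)+1)) - 1) = (-(n:ℤ)) * ((-(n:ℤ))-1) + 2 * (n + 1) := by
        ring
      have e4 : α ≤ |α| := le_abs_self α
      push_cast
      linarith

noncomputable def Mz (z : ℂ) : ℝ := max (max ‖z‖ ‖z‖⁻¹) 1

lemma one_le_Mz (z : ℂ) : 1 ≤ Mz z := le_max_right _ _

lemma norm_zpow_le (z : ℂ) (hz : z ≠ 0) {a : ℤ} {b : ℕ} (h : a.natAbs ≤ b) :
    ‖z ^ a‖ ≤ Mz z ^ b := by
  have hz' : ‖z‖ ≠ 0 := norm_ne_zero_iff.mpr hz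
  rw [norm_zpow]
  rcases le_or_gt 0 a with ha | ha
  · have : ‖z‖ ^ a = ‖z‖ ^ a.natAbs := by
      rw [← zpow_natCast]; congr 1; omega
    rw [this]
    calc ‖z‖ ^ a.natAbs ≤ Mz z ^ a.natAbs := by
          apply pow_le_pow_left₀ (norm_nonneg _)
          exact le_trans (le_max_left _ _) (le_max_left _ _)
      _ ≤ Mz z ^ b := pow_le_pow_right₀ (one_le_Mz z) h
  · have : ‖z‖ ^ a = (‖z‖⁻¹) ^ a.natAbs := by
      rw [inv_pow, ← zpow_natCast, ← zpow_neg]; congr 1; omega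
    rw [this]
    calc (‖z‖⁻¹) ^ a.natAbs ≤ Mz z ^ a.natAbs := by
          apply pow_le_pow_left₀ (by positivity)
          exact le_trans (le_max_right _ _) (le_max_left _ _)
      _ ≤ Mz z ^ b := pow_le_pow_right₀ (one_le_Mz z) h

-- ===== from p3.lean =====


variable {q : ℂ} (hq0 : 0 < ‖q‖) (hq : ‖q‖ < 1)

lemma qp_log_summable (hq : ‖q‖ < 1) (a : ℂ) :
    Summable (fun k : ℕ => Complex.log (1 - a * q ^ k)) := by
  have hρ : ‖q‖ < 1 := hq
  obtain ⟨N, hN⟩ : ∃ N : ℕ, ‖a‖ * ‖q‖ ^ N ≤ 1 / 2 := by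
    have := (tendsto_pow_atTop_nhds_zero_of_lt_one (norm_nonneg q) hρ).const_mul ‖a‖
    simp only [mul_zero] at this
    exact ((this.eventually (eventually_le_nhds (by norm_num : (0:ℝ) < 1/2))).exists)
  rw [← summable_nat_add_iff N]
  apply Summable.of_norm_bounded
    (g := fun k : ℕ => 3 / 2 * (‖a‖ * ‖q‖ ^ N) * ‖q‖ ^ k)
  · exact ((summable_geometric_of_lt_one (norm_nonneg q) hρ).mul_left _)
  · intro k
    have hsmall : ‖-(a * q ^ (k + N))‖ ≤ 1 / 2 := by
      rw [norm_neg, norm_mul, norm_pow]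
      calc ‖a‖ * ‖q‖ ^ (k + N) = (‖a‖ * ‖q‖ ^ N) * ‖q‖ ^ k := by rw [pow_add]; ring
        _ ≤ (1/2) * 1 := by
            apply mul_le_mul hN (pow_le_one₀ (norm_nonneg q) hρ.le) (by positivity)
              (by norm_num)
        _ = 1 / 2 := by norm_num
    have : (1 : ℂ) - a * q ^ (k + N) = 1 + -(a * q ^ (k + N)) := by ring
    rw [this]
    calc ‖Complex.log (1 + -(a * q ^ (k + N)))‖ ≤ 3/2 * ‖-(a * q ^ (k + N))‖ :=
          Complex.norm_log_one_add_half_le_self hsmall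
      _ = 3/2 * (‖a‖ * ‖q‖ ^ (k + N)) := by rw [norm_neg, norm_mul, norm_pow]
      _ = 3 / 2 * (‖a‖ * ‖q‖ ^ N) * ‖q‖ ^ k := by rw [pow_add]; ring

lemma qp_hasProd (hq : ‖q‖ < 1) (a : ℂ) (hne : ∀ k : ℕ, 1 - a * q ^ k ≠ 0) :
    HasProd (fun k : ℕ => 1 - a * q ^ k) (qPoch a q) := by
  have h := Complex.hasProd_of_hasSum_log (f := fun k : ℕ => 1 - a * q ^ k) hne
    (qp_log_summable hq a).hasSum
  rw [qPoch, h.tprod_eq]; exact h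

lemma qp_ne_zero (hq : ‖q‖ < 1) (a : ℂ) (hne : ∀ k : ℕ, 1 - a * q ^ k ≠ 0) :
    qPoch a q ≠ 0 := by
  have h := Complex.cexp_tsum_eq_tprod (f := fun k : ℕ => 1 - a * q ^ k) hne
    (qp_log_summable hq a)
  rw [qPoch, ← h]
  exact Complex.exp_ne_zero _

lemma qp_tendsto (hq : ‖q‖ < 1) (a : ℂ) (hne : ∀ k : ℕ, 1 - a * q ^ k ≠ 0) :
    Tendsto (fun N => ∏ k ∈ range N, (1 - a * q ^ k)) atTop (𝓝 (qPoch a q)) :=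
  (qp_hasProd hq a hne).tendsto_prod_nat

-- ===== from p4.lean =====

variable {q : ℂ}

/-- partial products of `(q;q)`. -/
noncomputable def PP (q : ℂ) (N : ℕ) : ℂ := ∏ k ∈ range N, (1 - q * q ^ k)
noncomputable def gb (q : ℂ) (N j : ℕ) : ℂ := PP q N / (PP q j * PP q (N - j))

lemma PP_factor_ne (hq : ‖q‖ < 1) (k : ℕ) : 1 - q * q ^ k ≠ 0 := by
  intro h
  have h1 : q * q ^ k = 1 := by linear_combination -h
  have : ‖q * q ^ k‖ < 1 := by
    rw [norm_mul, norm_pow]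
    calc ‖q‖ * ‖q‖ ^ k ≤ ‖q‖ * 1 := by
          apply mul_le_mul_of_nonneg_left (pow_le_one₀ (norm_nonneg _) hq.le)
            (norm_nonneg _)
      _ < 1 := by simpa using hq
  rw [h1] at this; simp at this

lemma PP_ne (hq : ‖q‖ < 1) (N : ℕ) : PP q N ≠ 0 :=
  prod_ne_zero_iff.mpr fun k _ => PP_factor_ne hq k

lemma PP_succ (N : ℕ) : PP q (N + 1) = PP q N * (1 - q * q ^ N) := prod_range_succ _ _

lemma PP_zero : PP q 0 = 1 := rfl

lemma gb_zero (hq : ‖q‖ < 1) (N : ℕ) : gb q N 0 = 1 := by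
  simp [gb, PP_zero, div_self (PP_ne hq N)]

lemma gb_diag (hq : ‖q‖ < 1) (N : ℕ) : gb q N N = 1 := by
  simp [gb, PP_zero, div_self (PP_ne hq N)]

lemma gb_pascal (hq : ‖q‖ < 1) (a d : ℕ) :
    gb q (a + d + 2) (a + 1)
      = gb q (a + 1 + d) (a + 1) + q ^ (d + 1) * gb q (a + 1 + d) a := by
  have h1 : a + d + 2 - (a + 1) = d + 1 := by omega
  have h2 : a + 1 + d - (a + 1) = d := by omega
  have h3 : a + 1 + d - a = d + 1 := by omega
  have e0 : a + d + 2 = (a + 1 + d) + 1 := by omega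
  rw [gb, gb, gb, h1, h2, h3, e0, PP_succ, PP_succ, PP_succ]
  have n1 := PP_ne hq (a + 1 + d)
  have n2 := PP_ne hq a
  have n3 := PP_ne hq d
  have f1 := PP_factor_ne hq a
  have f2 := PP_factor_ne hq d
  field_simp
  ring

lemma nhalf (j : ℕ) : (j + 1) * ((j + 1) - 1) / 2 = j * (j - 1) / 2 + j := by
  rcases j with _ | m
  · rfl
  · obtain ⟨k, hk⟩ := Nat.even_mul_succ_self m
    have h2 : (m + 1) * ((m + 1) - 1) = k + k := by
      simpa [Nat.add_sub_cancel, Nat.mul_comm] using hk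
    have h1 : (m + 1 + 1) * ((m + 1 + 1) - 1) = (k + k) + 2 * (m + 1) := by
      simp only [Nat.add_sub_cancel]
      have : (m + 1 + 1) * (m + 1) = m * (m + 1) + 2 * (m + 1) := by ring
      omega
    rw [h1, h2]
    omega

lemma qbinom (hq : ‖q‖ < 1) (z : ℂ) (N : ℕ) :
    ∏ k ∈ range N, (1 + z * q ^ k)
      = ∑ j ∈ range (N + 1), q ^ (j * (j - 1) / 2) * gb q N j * z ^ j := by
  induction N with
  | zero => simp [gb_diag hq 0]
  | succ N ih =>
    rw [prod_range_succ, ih]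
    set t : ℕ → ℂ := fun j => q ^ (j * (j - 1) / 2) * gb q N j * z ^ j with ht
    set T : ℕ → ℂ := fun j => q ^ (j * (j - 1) / 2) * gb q (N + 1) j * z ^ j with hT
    have hT0 : T 0 = 1 := by simp [hT, gb_zero hq]
    have ht0 : t 0 = 1 := by simp [ht, gb_zero hq]
    set u : ℕ → ℂ := fun i => q ^ (i * (i - 1) / 2 + N) * gb q N i * z ^ (i + 1) with hu
    have expand : (∑ j ∈ range (N + 1), t j) * (1 + z * q ^ N)
        = (∑ j ∈ range (N + 1), t j) + (∑ i ∈ range (N + 1), u i) := by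
      rw [mul_add, mul_one, sum_mul]
      congr 1
      apply sum_congr rfl
      intro i _
      rw [ht, hu]
      simp only []
      rw [pow_add]
      ring
    rw [expand]
    rw [sum_range_succ' T (N + 1), hT0]
    have key : ∀ i ∈ range (N + 1), T (i + 1) = (if i = N then 0 else t (i + 1)) + u i := by
      intro i hi
      rw [mem_range] at hi
      rcases eq_or_lt_of_le (Nat.lt_succ_iff.mp hi) with hiN | hiN
      · subst hiN
        rw [if_pos rfl, zero_add, hT, hu]
        simp only []
        rw [gb_diag hq, gb_diag hq, nhalf, pow_add]
      · rw [if_neg (by omega)]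
        have hpas : gb q (N + 1) (i + 1) = gb q N (i + 1) + q ^ (N - i) * gb q N i := by
          have := gb_pascal hq i (N - 1 - i)
          have e1 : i + (N - 1 - i) + 2 = N + 1 := by omega
          have e2 : i + 1 + (N - 1 - i) = N := by omega
          have e3 : N - 1 - i + 1 = N - i := by omega
          rw [e1, e2, e3] at this
          exact this
        have e4 : i * (i - 1) / 2 + i + (N - i) = i * (i - 1) / 2 + N := by omega
        rw [hT, hu, ht]
        simp only []
        rw [hpas, nhalf, ← e4, pow_add, pow_add]
        ring
    rw [sum_congr rfl key]
    rw [sum_add_distrib]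
    have : (∑ i ∈ range (N + 1), if i = N then (0:ℂ) else t (i + 1))
        = ∑ i ∈ range N, t (i + 1) := by
      rw [sum_range_succ, if_pos rfl, add_zero]
      apply sum_congr rfl
      intro i hi
      rw [mem_range] at hi
      rw [if_neg (by omega)]
    rw [this]
    have : (∑ j ∈ range (N + 1), t j) = ∑ i ∈ range N, t (i + 1) + 1 := by
      rw [sum_range_succ' t N, ht0]
    rw [this]
    ring

-- ===== from p5.lean =====

lemma cast_half (j : ℕ) : ((j * (j - 1) / 2 : ℕ) : ℤ) = (j : ℤ) * ((j : ℤ) - 1) / 2 := by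
  rcases j with _ | m
  · rfl
  · obtain ⟨k, hk⟩ := Nat.even_mul_succ_self m
    have h2 : (m + 1) * ((m + 1) - 1) = k + k := by
      simpa [Nat.mul_comm] using hk
    have h3 : ((m:ℤ) + 1) * (((m:ℤ) + 1) - 1) = (k:ℤ) + k := by
      have h4 : ((m:ℤ)) * ((m:ℤ) + 1) = (k:ℤ) + k := by exact_mod_cast hk
      linear_combination h4
    have hL : (m + 1) * ((m + 1) - 1) / 2 = k := by omega
    rw [hL]
    push_cast
    omega

lemma sum_range_succ_gauss (N : ℕ) : 2 * (∑ j ∈ range N, (j + 1)) = N * (N + 1) := by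
  induction N with
  | zero => simp
  | succ N ih =>
    rw [sum_range_succ]
    have : (N+1) * (N+1+1) = N*(N+1) + 2*(N+1) := by ring
    omega

variable {q x : ℂ}

lemma finJTP (hq : ‖q‖ < 1) (hqne : q ≠ 0) (hx : x ≠ 0) (N : ℕ) :
    (∏ k ∈ range N, (1 - x * q ^ k)) * (∏ k ∈ range N, (1 - (q * x⁻¹) * q ^ k))
      = ∑ m ∈ Finset.Icc (-(N:ℤ)) (N:ℤ),
          (-1 : ℂ) ^ m * q ^ (m * (m - 1) / 2) * x ^ m * gb q (2*N) (m + N).toNat := by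
  classical
  set z : ℂ := -(x * (q ^ N)⁻¹) with hz
  set S : ℕ := ∑ j ∈ range N, (j + 1) with hS
  have hS2 : 2 * S = N * (N + 1) := sum_range_succ_gauss N
  set F : ℂ := (-1 : ℂ) ^ (N : ℤ) * x ^ (N : ℤ) * q ^ (-(S : ℤ)) with hF
  have hFne : F ≠ 0 := by
    apply mul_ne_zero (mul_ne_zero _ _) (zpow_ne_zero _ hqne)
    · exact zpow_ne_zero _ (by norm_num)
    · exact zpow_ne_zero _ hx
  -- Step A : product splitting
  have hsplit : ∏ k ∈ range (2*N), (1 + z * q ^ k)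
      = F * ((∏ k ∈ range N, (1 - x * q ^ k)) * (∏ k ∈ range N, (1 - (q * x⁻¹) * q ^ k))) := by
    rw [two_mul, prod_range_add]
    have h2 : ∀ k ∈ range N, (1 + z * q ^ (N + k)) = 1 - x * q ^ k := by
      intro k _
      rw [hz, pow_add]
      field_simp
      ring
    rw [prod_congr rfl h2]
    have h1 : ∏ k ∈ range N, (1 + z * q ^ k)
        = F * ∏ k ∈ range N, (1 - (q * x⁻¹) * q ^ k) := by
      rw [← prod_range_reflect]
      have h3 : ∀ j ∈ range N, (1 + z * q ^ (N - 1 - j))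
          = ((-x) * (q ^ (j+1))⁻¹) * (1 - (q * x⁻¹) * q ^ j) := by
        intro j hj
        rw [mem_range] at hj
        have hq1 : q ^ (N - 1 - j) * q ^ (j + 1) = q ^ N := by
          rw [← pow_add]; congr 1; omega
        have hqj : (q : ℂ) ^ (j+1) ≠ 0 := pow_ne_zero _ hqne
        have hqN : (q : ℂ) ^ N ≠ 0 := pow_ne_zero _ hqne
        have hrw : q ^ (N - 1 - j) = q ^ N * (q ^ (j+1))⁻¹ := by
          field_simp [← hq1]
          exact hq1
        rw [hz, hrw, pow_succ]
        field_simp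
        ring
      rw [prod_congr rfl h3, prod_mul_distrib, prod_mul_distrib]
      congr 1
      rw [prod_const, prod_inv_distrib, prod_pow_eq_pow_sum]
      rw [hF, neg_pow, zpow_natCast, zpow_natCast, zpow_neg, zpow_natCast]
      simp only [card_range]
      rfl
    rw [h1]
    ring
  -- Step B : apply q-binomial and reindex
  have hqb := qbinom hq z (2 * N)
  rw [hsplit] at hqb
  have key : ∀ j ∈ range (2*N + 1),
      (-1 : ℂ) ^ ((j:ℤ) - N) * q ^ (((j:ℤ) - N) * (((j:ℤ) - N) - 1) / 2) * x ^ ((j:ℤ) - N)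
          * gb q (2*N) ((((j:ℤ) - N) + N).toNat)
        = F⁻¹ * (q ^ (j * (j - 1) / 2) * gb q (2*N) j * z ^ j) := by
    intro j hj
    have htn : (((j:ℤ) - N) + N).toNat = j := by omega
    rw [htn]
    have hzj : z ^ j = (-1 : ℂ) ^ (j:ℤ) * x ^ (j:ℤ) * q ^ (-((N:ℤ) * j)) := by
      have h1 : (-((N:ℤ) * j)) = -(((N*j : ℕ) : ℤ)) := by push_cast; ring
      rw [hz, neg_pow, mul_pow, inv_pow, ← pow_mul, h1, zpow_neg, zpow_natCast,
        zpow_natCast, zpow_natCast]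
      ring
    have hexp : ((j * (j - 1) / 2 : ℕ) : ℤ) - (N:ℤ)*j
        = ((j:ℤ) - N) * (((j:ℤ) - N) - 1) / 2 - S := by
      have e1 := cast_half j
      have e2 := hf_half ((j:ℤ) - N)
      have e3 := hf_half ((j:ℤ))
      have e4 : ((j:ℤ) - N) * (((j:ℤ) - N) - 1)
          = (j:ℤ)*((j:ℤ) - 1) - 2*((N:ℤ)*j) + (N:ℤ)*((N:ℤ)+1) := by ring
      have e5 : (2 * S : ℤ) = (N:ℤ) * ((N:ℤ)+1) := by exact_mod_cast hS2
      omega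
    have hq2 : (q : ℂ) ^ (j * (j - 1) / 2 : ℕ) = q ^ ((j * (j - 1) / 2 : ℕ) : ℤ) := by
      rw [zpow_natCast]
    have hFinv : F⁻¹ = (-1 : ℂ) ^ (-(N : ℤ)) * x ^ (-(N : ℤ)) * q ^ ((S : ℤ)) := by
      rw [hF, mul_inv, mul_inv, ← zpow_neg, ← zpow_neg, ← zpow_neg]
      norm_num
    have e6 : (-1:ℂ) ^ (-(N:ℤ)) * (-1:ℂ) ^ ((j:ℤ)) = (-1:ℂ) ^ ((j:ℤ) - N) := by
      rw [← zpow_add₀ (by norm_num : (-1:ℂ) ≠ 0),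
        show -(N:ℤ) + (j:ℤ) = (j:ℤ) - (N:ℤ) by ring]
    have e7 : x ^ (-(N:ℤ)) * x ^ ((j:ℤ)) = x ^ ((j:ℤ) - N) := by
      rw [← zpow_add₀ hx, show -(N:ℤ) + (j:ℤ) = (j:ℤ) - (N:ℤ) by ring]
    have e8 : (q:ℂ) ^ ((S:ℤ)) * ((q:ℂ) ^ ((j * (j - 1) / 2 : ℕ) : ℤ) * (q:ℂ) ^ (-((N:ℤ)*j)))
        = q ^ (((j:ℤ) - N) * (((j:ℤ) - N) - 1) / 2) := by
      rw [← zpow_add₀ hqne, ← zpow_add₀ hqne]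
      congr 1
      linarith [hexp]
    calc (-1 : ℂ) ^ ((j:ℤ) - N) * q ^ (((j:ℤ) - N) * (((j:ℤ) - N) - 1) / 2) * x ^ ((j:ℤ) - N)
          * gb q (2*N) j
        = ((-1:ℂ) ^ (-(N:ℤ)) * (-1:ℂ) ^ ((j:ℤ))) * (x ^ (-(N:ℤ)) * x ^ ((j:ℤ)))
            * ((q:ℂ) ^ ((S:ℤ)) * ((q:ℂ) ^ ((j * (j - 1) / 2 : ℕ) : ℤ) * (q:ℂ) ^ (-((N:ℤ)*j))))
            * gb q (2*N) j := by rw [e6, e7, e8]; ring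
      _ = F⁻¹ * (q ^ (j * (j - 1) / 2 : ℕ) * gb q (2*N) j * z ^ j) := by
          rw [hFinv, hzj, hq2]; ring
  have hre : ∑ m ∈ Finset.Icc (-(N:ℤ)) (N:ℤ),
        (-1 : ℂ) ^ m * q ^ (m * (m - 1) / 2) * x ^ m * gb q (2*N) (m + N).toNat
      = ∑ j ∈ range (2*N + 1), F⁻¹ * (q ^ (j * (j - 1) / 2) * gb q (2*N) j * z ^ j) := by
    apply Finset.sum_nbij' (i := fun m : ℤ => (m + N).toNat) (j := fun j : ℕ => (j:ℤ) - N)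
    · intro m hm; rw [Finset.mem_Icc] at hm; rw [mem_range]; omega
    · intro j hj; rw [mem_range] at hj; rw [Finset.mem_Icc]; omega
    · intro m hm; rw [Finset.mem_Icc] at hm; omega
    · intro j hj; rw [mem_range] at hj; omega
    · intro m hm
      rw [Finset.mem_Icc] at hm
      have hmm : ((m + (N:ℤ)).toNat : ℤ) - (N:ℤ) = m := by omega
      have := key (m + (N:ℤ)).toNat (by rw [mem_range]; omega)
      rw [hmm] at this
      rw [this]
  rw [hre, ← Finset.mul_sum, ← hqb]
  rw [inv_mul_cancel_left₀ hFne]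

-- ===== from p6.lean =====

noncomputable def thetaTerm (q x : ℂ) (m : ℤ) : ℂ :=
  (-1 : ℂ) ^ m * q ^ (m * (m - 1) / 2) * x ^ m

section JTPsec
variable {q x : ℂ}

lemma norm_thetaTerm_le (hqne : q ≠ 0) (hx : x ≠ 0) (m : ℤ) :
    ‖thetaTerm q x m‖ ≤ ((m.natAbs : ℝ) + 1) * ‖q‖ ^ (m * (m - 1) / 2 + 0 * m)
      * (Mz x) ^ m.natAbs := by
  have h2 : (m * (m - 1) / 2 + 0 * m) = m * (m - 1) / 2 := by ring
  rw [h2, thetaTerm, norm_mul, norm_mul, norm_zpow, norm_neg, norm_one, one_zpow, one_mul,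
    norm_zpow]
  have h1 : ‖x ^ m‖ ≤ (Mz x) ^ m.natAbs := norm_zpow_le x hx le_rfl
  have h3 : (0:ℝ) ≤ ‖q‖ ^ (m * (m - 1) / 2) := zpow_nonneg (norm_nonneg q) _
  have h4 : (0:ℝ) ≤ (m.natAbs : ℝ) := Nat.cast_nonneg _
  have h5 : (0:ℝ) ≤ (Mz x) ^ m.natAbs := pow_nonneg (le_trans zero_le_one (one_le_Mz x)) _
  calc ‖q‖ ^ (m * (m - 1) / 2) * ‖x ^ m‖ ≤ ‖q‖ ^ (m * (m - 1) / 2) * (Mz x) ^ m.natAbs :=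
        mul_le_mul_of_nonneg_left h1 h3
    _ ≤ ((m.natAbs : ℝ) + 1) * ‖q‖ ^ (m * (m - 1) / 2) * (Mz x) ^ m.natAbs := by
        nlinarith [mul_nonneg h4 (mul_nonneg h3 h5)]

lemma summable_thetaTerm_bound (hq0 : 0 < ‖q‖) (hq : ‖q‖ < 1)
    (hx : x ≠ 0) (K : ℝ) :
    Summable (fun m : ℤ => K * (((m.natAbs : ℝ) + 1) * ‖q‖ ^ (m * (m - 1) / 2 + 0 * m)
      * (Mz x) ^ m.natAbs)) := by
  have h0 : (0:ℝ) < ‖q‖ := hq0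
  have h1 : ‖q‖ < 1 := hq
  exact (master_int h0 h1 (le_trans zero_le_one (one_le_Mz x)) 0).mul_left K

theorem JTP (hq0 : 0 < ‖q‖) (hq : ‖q‖ < 1) (hx : x ≠ 0)
    (hgen : ∀ k : ℤ, 1 - x * q ^ k ≠ 0) :
    Theta x q = ∑' m : ℤ, thetaTerm q x m := by
  have hqne : q ≠ 0 := by
    intro h; rw [h] at hq0; simp at hq0
  have hne_x : ∀ k : ℕ, 1 - x * q ^ k ≠ 0 := by
    intro k
    have := hgen (k : ℤ)
    rwa [zpow_natCast] at this
  have hne_qx : ∀ k : ℕ, 1 - (q * x⁻¹) * q ^ k ≠ 0 := by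
    intro k h
    have hxq : x = q ^ (k+1) := by
      field_simp at h
      rw [pow_succ]
      linear_combination h
    apply hgen (-((k:ℤ)+1))
    rw [hxq, ← zpow_natCast q (k+1), ← zpow_add₀ hqne]
    rw [show ((k+1:ℕ):ℤ) + -((k:ℤ)+1) = 0 by push_cast; ring, zpow_zero]
    ring
  have hne_q : ∀ k : ℕ, 1 - q * q ^ k ≠ 0 := PP_factor_ne hq
  set Pinf : ℂ := qPoch q q with hPinf
  have hPlim : Tendsto (PP q) atTop (𝓝 Pinf) := qp_tendsto hq q hne_q
  have hPinf_ne : Pinf ≠ 0 := qp_ne_zero hq q hne_q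
  -- upper bound B
  have hnorm : Tendsto (fun n => ‖PP q n‖) atTop (𝓝 ‖Pinf‖) := hPlim.norm
  obtain ⟨B, hB⟩ : ∃ B : ℝ, ∀ n, ‖PP q n‖ ≤ B := by
    obtain ⟨B, hB⟩ := hnorm.bddAbove_range
    exact ⟨B, fun n => hB (Set.mem_range_self n)⟩
  -- lower bound c
  obtain ⟨c, hc0, hc⟩ : ∃ c : ℝ, 0 < c ∧ ∀ n, c ≤ ‖PP q n‖ := by
    have hpos : 0 < ‖Pinf‖ := norm_pos_iff.mpr hPinf_ne
    have hev : ∀ᶠ n in atTop, ‖Pinf‖ / 2 ≤ ‖PP q n‖ :=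
      hnorm.eventually (eventually_ge_nhds (by linarith))
    obtain ⟨N₀, hN₀⟩ := eventually_atTop.mp hev
    refine ⟨min (‖Pinf‖ / 2) ((range (N₀ + 1)).inf' ⟨0, by simp⟩ (fun n => ‖PP q n‖)),
      lt_min (by linarith) ?_, ?_⟩
    · apply (Finset.lt_inf'_iff _).mpr
      intro n _
      exact norm_pos_iff.mpr (PP_ne hq n)
    · intro n
      rcases le_or_gt n N₀ with h | h
      · exact le_trans (min_le_right _ _) (Finset.inf'_le _ (by simp; omega))
      · exact le_trans (min_le_left _ _) (hN₀ n h.le)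
  have hBpos : 0 < B := lt_of_lt_of_le (lt_of_lt_of_le hc0 (hc 0)) (hB 0)
  set K : ℝ := B * B / (c * c) with hK
  -- coefficients
  set G : ℕ → ℤ → ℂ := fun N m =>
    if m.natAbs ≤ N then gb q (2*N) (m + N).toNat * PP q N else 0 with hG
  have hGeq : ∀ (m : ℤ) (N : ℕ), m.natAbs ≤ N →
      G N m = PP q (2*N) * PP q N / (PP q (m + N).toNat * PP q ((N : ℤ) - m).toNat) := by
    intro m N hmN
    rw [hG]
    simp only [if_pos hmN]
    rw [gb]
    have : 2*N - (m + N).toNat = ((N:ℤ) - m).toNat := by omega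
    rw [this, div_mul_eq_mul_div]
  have hGlim : ∀ m : ℤ, Tendsto (fun N => G N m) atTop (𝓝 1) := by
    intro m
    have t2 : Tendsto (fun N : ℕ => (m + (N:ℤ)).toNat) atTop atTop := by
      apply tendsto_atTop_atTop.mpr
      intro b
      exact ⟨b + m.natAbs, fun N hN => by omega⟩
    have t3 : Tendsto (fun N : ℕ => ((N:ℤ) - m).toNat) atTop atTop := by
      apply tendsto_atTop_atTop.mpr
      intro b
      exact ⟨b + m.natAbs, fun N hN => by omega⟩
    have t1 : Tendsto (fun N : ℕ => 2 * N) atTop atTop :=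
      tendsto_atTop_atTop.mpr fun b => ⟨b, fun N hN => by omega⟩
    have lim1 : Tendsto (fun N => PP q (2*N) * PP q N /
        (PP q (m + N).toNat * PP q ((N : ℤ) - m).toNat)) atTop
        (𝓝 (Pinf * Pinf / (Pinf * Pinf))) := by
      exact ((hPlim.comp t1).mul hPlim).div ((hPlim.comp t2).mul (hPlim.comp t3))
        (mul_ne_zero hPinf_ne hPinf_ne)
    have : Pinf * Pinf / (Pinf * Pinf) = 1 := by
      field_simp
    rw [this] at lim1
    apply lim1.congr'
    filter_upwards [eventually_ge_atTop m.natAbs] with N hN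
    exact (hGeq m N hN).symm
  have hGbound : ∀ (N : ℕ) (m : ℤ), ‖G N m‖ ≤ K := by
    intro N m
    rcases le_or_gt m.natAbs N with h | h
    · rw [hGeq m N h, norm_div, norm_mul, norm_mul]
      apply div_le_div₀ (by positivity)
        (mul_le_mul (hB _) (hB _) (norm_nonneg _) hBpos.le) (by positivity)
        (mul_le_mul (hc _) (hc _) hc0.le (norm_nonneg _))
    · rw [hG]; simp only [if_neg (not_le.mpr h)]
      rw [norm_zero, hK]
      positivity
  -- the partial sums as tsums
  have hseq : ∀ N : ℕ,
      ((∏ k ∈ range N, (1 - x * q ^ k)) * (∏ k ∈ range N, (1 - (q * x⁻¹) * q ^ k)))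
        * PP q N = ∑' m : ℤ, thetaTerm q x m * G N m := by
    intro N
    rw [finJTP hq hqne hx N]
    have h0 : ∀ m ∉ Finset.Icc (-(N:ℤ)) (N:ℤ), thetaTerm q x m * G N m = 0 := by
      intro m hm
      rw [Finset.mem_Icc] at hm
      rw [hG]
      simp only []
      rw [if_neg (show ¬ m.natAbs ≤ N by omega), mul_zero]
    rw [tsum_eq_sum h0, Finset.sum_mul]
    apply Finset.sum_congr rfl
    intro m hm
    rw [Finset.mem_Icc] at hm
    rw [hG]
    simp only []
    rw [if_pos (show m.natAbs ≤ N by omega), thetaTerm]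
    ring
  -- limit of LHS
  have hL : Tendsto (fun N =>
      ((∏ k ∈ range N, (1 - x * q ^ k)) * (∏ k ∈ range N, (1 - (q * x⁻¹) * q ^ k)))
        * PP q N) atTop (𝓝 (Theta x q)) := by
    have h := ((qp_tendsto hq x hne_x).mul (qp_tendsto hq (q * x⁻¹) hne_qx)).mul hPlim
    have hT : Theta x q = qPoch x q * qPoch (q * x⁻¹) q * qPoch q q := by
      rw [show Theta x q = qPoch x q * qPoch (q / x) q * qPoch q q from rfl, div_eq_mul_inv]
    rw [hT]
    exact h
  -- limit of RHS by dominated convergence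
  have hR : Tendsto (fun N => ∑' m : ℤ, thetaTerm q x m * G N m) atTop
      (𝓝 (∑' m : ℤ, thetaTerm q x m)) := by
    have hdom := tendsto_tsum_of_dominated_convergence
      (𝓕 := atTop) (f := fun N (m : ℤ) => thetaTerm q x m * G N m)
      (g := fun m => thetaTerm q x m)
      (bound := fun m => K * (((m.natAbs : ℝ) + 1) * ‖q‖ ^ (m * (m - 1) / 2 + 0 * m)
        * (Mz x) ^ m.natAbs))
      (summable_thetaTerm_bound hq0 hq hx K) ?_ ?_
    · exact hdom
    · intro m
      have := (hGlim m).const_mul (thetaTerm q x m)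
      simpa using this
    · apply Eventually.of_forall
      intro N m
      rw [norm_mul]
      calc ‖thetaTerm q x m‖ * ‖G N m‖ ≤ (((m.natAbs : ℝ) + 1)
            * ‖q‖ ^ (m * (m - 1) / 2 + 0 * m) * (Mz x) ^ m.natAbs) * K := by
            apply mul_le_mul (norm_thetaTerm_le hqne hx m) (hGbound N m) (norm_nonneg _)
            have h3 : (0:ℝ) ≤ ‖q‖ ^ (m * (m - 1) / 2 + 0 * m) := zpow_nonneg (norm_nonneg q) _
            have h5 : (0:ℝ) ≤ (Mz x) ^ m.natAbs :=
              pow_nonneg (le_trans zero_le_one (one_le_Mz x)) _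
            have h4 : (0:ℝ) ≤ (m.natAbs : ℝ) + 1 := by positivity
            nlinarith [mul_nonneg h4 (mul_nonneg h3 h5)]
        _ = K * (((m.natAbs : ℝ) + 1) * ‖q‖ ^ (m * (m - 1) / 2 + 0 * m)
            * (Mz x) ^ m.natAbs) := by ring
  have := tendsto_nhds_unique (hL.congr (fun N => hseq N)) hR
  exact this
end JTPsec

-- ===== from p8.lean =====


lemma sg2_both_nonneg {r s : ℤ} (hr : 0 ≤ r) (hs : 0 ≤ s) : sg2 r s = 1 := by
  rw [sg2, sg, sg, if_pos hr, if_pos hs]; norm_num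

lemma sg2_both_neg {r s : ℤ} (hr : ¬ 0 ≤ r) (hs : ¬ 0 ≤ s) : sg2 r s = -1 := by
  rw [sg2, sg, sg, if_neg hr, if_neg hs]; norm_num

lemma sg2_mix1 {r s : ℤ} (hr : 0 ≤ r) (hs : ¬ 0 ≤ s) : sg2 r s = 0 := by
  rw [sg2, sg, sg, if_pos hr, if_neg hs]; norm_num

lemma sg2_mix2 {r s : ℤ} (hr : ¬ 0 ≤ r) (hs : 0 ≤ s) : sg2 r s = 0 := by
  rw [sg2, sg, sg, if_neg hr, if_pos hs]; norm_num

lemma sg2_norm_le (r s : ℤ) : ‖sg2 r s‖ ≤ 1 := by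
  rcases le_or_gt 0 r with hr | hr <;> rcases le_or_gt 0 s with hs | hs
  · rw [sg2_both_nonneg hr hs]; norm_num
  · rw [sg2_mix1 hr (not_le.mpr hs)]; norm_num
  · rw [sg2_mix2 (not_le.mpr hr) hs]; norm_num
  · rw [sg2_both_neg (not_le.mpr hr) (not_le.mpr hs)]; norm_num

lemma neg_one_zpow_mul_self (k : ℤ) : (-1:ℂ) ^ k * (-1:ℂ) ^ k = 1 := by
  rw [← zpow_add₀ (by norm_num : (-1:ℂ) ≠ 0), show k + k = 2 * k by ring, zpow_mul]
  norm_num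

lemma neg_one_zpow_inv (k : ℤ) : ((-1:ℂ) ^ k)⁻¹ = (-1:ℂ) ^ k :=
  inv_eq_of_mul_eq_one_left (neg_one_zpow_mul_self k)

lemma neg_one_zpow_neg (k : ℤ) : (-1:ℂ) ^ (-k) = (-1:ℂ) ^ k := by
  rw [zpow_neg, neg_one_zpow_inv]

-- ===== from p7.lean =====

lemma GSa (X Y t : ℂ) (hXne : X ≠ 0) (hXt : X * t = Y) (nn : ℕ) :
    (1 - t) * ∑ j ∈ range (nn+1), X ^ j * Y ^ (nn - j) = X ^ nn - X⁻¹ * Y ^ (nn+1) := by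
  have hgs := geom_sum₂_mul X Y (nn + 1)
  simp only [Nat.add_sub_cancel] at hgs
  have hXY : X - Y = X * (1 - t) := by rw [mul_sub, mul_one, hXt]
  rw [hXY] at hgs
  apply mul_left_cancel₀ hXne
  calc X * ((1 - t) * ∑ j ∈ range (nn+1), X ^ j * Y ^ (nn - j))
      = (∑ j ∈ range (nn+1), X ^ j * Y ^ (nn - j)) * (X * (1 - t)) := by ring
    _ = X ^ (nn+1) - Y ^ (nn+1) := hgs
    _ = X * (X ^ nn - X⁻¹ * Y ^ (nn+1)) := by
        rw [mul_sub, ← pow_succ']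
        congr 1
        rw [← mul_assoc, mul_inv_cancel₀ hXne, one_mul]

lemma GSc (X Y t : ℂ) (hXne : X ≠ 0) (hYne : Y ≠ 0) (hXt : X * t = Y) (m : ℕ) (n : ℤ)
    (hmn : (m : ℤ) = -n - 1) :
    (1 - t) * ∑ j ∈ range m, X ^ (n + 1 + (j:ℤ)) * Y ^ (n - (n + 1 + (j:ℤ)))
      = X ^ (-1 : ℤ) * Y ^ (n+1) - X ^ n := by
  set G : ℕ → ℂ := fun j => X ^ (n + (j:ℤ)) * Y ^ (-(j:ℤ)) with hGdef
  have htel := Finset.sum_range_sub G m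
  have hterm : ∀ j ∈ range m, (1 - t) * (X ^ (n + 1 + (j:ℤ)) * Y ^ (n - (n + 1 + (j:ℤ))))
      = G (j+1) - G j := by
    intro j _
    rw [hGdef]
    simp only []
    have e1 : n - (n + 1 + (j:ℤ)) = -((j:ℤ)+1) := by ring
    have e2 : n + ((j:ℤ)+1) = n + 1 + (j:ℤ) := by ring
    push_cast
    rw [e1, e2]
    have ht : t = X⁻¹ * Y := by
      rw [← hXt]; field_simp
    rw [ht]
    have hx1 : X ^ (n + (j:ℤ)) = X ^ (n + 1 + (j:ℤ)) * X⁻¹ := by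
      rw [← zpow_neg_one, ← zpow_add₀ hXne]
      congr 1
      ring
    have hy1 : Y ^ (-(j:ℤ)) = Y ^ (-((j:ℤ)+1)) * Y := by
      have h := zpow_add₀ hYne (-((j:ℤ)+1)) 1
      rw [zpow_one] at h
      rw [← h]
      congr 1
      ring
    rw [hx1, hy1]
    ring
  rw [Finset.mul_sum, Finset.sum_congr rfl hterm, htel]
  have hGm : G m = X ^ (-1 : ℤ) * Y ^ (n+1) := by
    rw [hGdef]
    simp only []
    rw [show n + (m:ℤ) = -1 by omega, show -(m:ℤ) = n + 1 by omega]
  have hG0 : G 0 = X ^ n := by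
    rw [hGdef]
    simp only []
    norm_num
  rw [hGm, hG0]

-- ===== from p9.lean =====

noncomputable def hkTerm (q x : ℂ) (i : ℤ) (p : ℤ × ℤ) : ℂ :=
  sg2 p.1 p.2 * (-1 : ℂ) ^ (p.1 + p.2) * (q * x⁻¹) ^ p.1 * (q ^ (i+1)) ^ p.2 *
    q ^ (1 * (p.1 * (p.1 - 1) / 2) + 1 * p.1 * p.2 + 1 * (p.2 * (p.2 - 1) / 2))

variable {q x : ℂ} {i : ℤ}

lemma hk_simp (n r : ℤ) : hkTerm q x i (r, n - r)
    = sg2 r (n - r) * (((-1:ℂ) ^ n * q ^ (n * (n - 1) / 2))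
        * ((q * x⁻¹) ^ r * (q ^ (i+1)) ^ (n - r))) := by
  rw [hkTerm]
  simp only []
  rw [hf_add r (n - r), show r + (n - r) = n by ring]
  ring

lemma hXt (hqne : q ≠ 0) (hx : x ≠ 0) : (q * x⁻¹) * (x * q ^ i) = q ^ (i+1) := by
  have h := zpow_add₀ hqne i 1
  rw [zpow_one] at h
  rw [h]
  field_simp

lemma claimA (hqne : q ≠ 0) (hx : x ≠ 0) (n : ℤ) :
    (1 - x * q ^ i) * (∑' r : ℤ, hkTerm q x i (r, n - r))
      = (-1:ℂ) ^ n * q ^ (n * (n - 1) / 2)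
        * ((q * x⁻¹) ^ n - (q * x⁻¹) ^ (-1 : ℤ) * (q ^ (i+1)) ^ (n+1)) := by
  have hXne : q * x⁻¹ ≠ 0 := mul_ne_zero hqne (inv_ne_zero hx)
  have hYne : (q : ℂ) ^ (i+1) ≠ 0 := zpow_ne_zero _ hqne
  have hxt := hXt (i := i) hqne hx
  set C : ℂ := (-1:ℂ) ^ n * q ^ (n * (n - 1) / 2) with hC
  rcases le_or_gt 0 n with hn | hn
  · -- n ≥ 0
    set nn : ℕ := n.toNat with hnn
    have hzero : ∀ r ∉ Finset.Icc (0:ℤ) n, hkTerm q x i (r, n - r) = 0 := by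
      intro r hr
      rw [Finset.mem_Icc] at hr
      push_neg at hr
      rw [hk_simp]
      rcases le_or_gt 0 r with h1 | h1
      · rw [sg2_mix1 h1 (by omega), zero_mul]
      · rw [sg2_mix2 (not_le.mpr h1) (by omega), zero_mul]
    rw [tsum_eq_sum hzero]
    have hcg : ∀ r ∈ Finset.Icc (0:ℤ) n, hkTerm q x i (r, n - r)
        = C * ((q * x⁻¹) ^ r * (q ^ (i+1)) ^ (n - r)) := by
      intro r hr
      rw [Finset.mem_Icc] at hr
      rw [hk_simp, sg2_both_nonneg hr.1 (by omega), one_mul, hC]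
    rw [Finset.sum_congr rfl hcg, ← Finset.mul_sum]
    have hconv : ∑ r ∈ Finset.Icc (0:ℤ) n, (q * x⁻¹) ^ r * (q ^ (i+1)) ^ (n - r)
        = ∑ j ∈ range (nn+1), (q * x⁻¹) ^ j * (q ^ (i+1)) ^ (nn - j) := by
      apply Finset.sum_nbij' (i := fun r : ℤ => r.toNat) (j := fun j : ℕ => (j:ℤ))
      · intro a ha; rw [Finset.mem_Icc] at ha; rw [mem_range]; omega
      · intro a ha; rw [mem_range] at ha; rw [Finset.mem_Icc]; omega
      · intro a ha; rw [Finset.mem_Icc] at ha; omega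
      · intro a ha; simp
      · intro a ha
        rw [Finset.mem_Icc] at ha
        rw [← zpow_natCast (q * x⁻¹) a.toNat, ← zpow_natCast (q ^ (i+1)) (nn - a.toNat)]
        congr 1
        · congr 1; omega
        · congr 1; omega
    rw [hconv]
    have hgs := GSa (q * x⁻¹) (q ^ (i+1)) (x * q ^ i) hXne hxt nn
    rw [show (1 - x * q^i) * (C * ∑ j ∈ range (nn+1), (q*x⁻¹)^j * (q^(i+1))^(nn-j))
      = C * ((1 - x * q^i) * ∑ j ∈ range (nn+1), (q*x⁻¹)^j * (q^(i+1))^(nn-j)) by ring,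
      hgs]
    have e1 : (q * x⁻¹) ^ (nn : ℕ) = (q * x⁻¹) ^ (n : ℤ) := by
      rw [← zpow_natCast (q * x⁻¹) nn]; congr 1; omega
    have e2 : (q ^ (i+1)) ^ (nn + 1 : ℕ) = (q ^ (i+1)) ^ ((n + 1 : ℤ)) := by
      rw [← zpow_natCast (q ^ (i+1)) (nn+1)]; congr 1; push_cast; omega
    rw [e1, e2, zpow_neg_one]
  · -- n < 0
    set m : ℕ := (-n-1).toNat with hm
    have hmn : (m : ℤ) = -n - 1 := by omega
    have hzero : ∀ r ∉ Finset.Icc (n+1 : ℤ) (-1), hkTerm q x i (r, n - r) = 0 := by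
      intro r hr
      rw [Finset.mem_Icc] at hr
      push_neg at hr
      rw [hk_simp]
      rcases le_or_gt 0 r with h1 | h1
      · rw [sg2_mix1 h1 (by omega), zero_mul]
      · rw [sg2_mix2 (not_le.mpr h1) (by omega), zero_mul]
    rw [tsum_eq_sum hzero]
    have hcg : ∀ r ∈ Finset.Icc (n+1 : ℤ) (-1), hkTerm q x i (r, n - r)
        = -C * ((q * x⁻¹) ^ r * (q ^ (i+1)) ^ (n - r)) := by
      intro r hr
      rw [Finset.mem_Icc] at hr
      rw [hk_simp, sg2_both_neg (by omega) (by omega), hC]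
      ring
    rw [Finset.sum_congr rfl hcg, ← Finset.mul_sum]
    have hconv : ∑ r ∈ Finset.Icc (n+1 : ℤ) (-1), (q * x⁻¹) ^ r * (q ^ (i+1)) ^ (n - r)
        = ∑ j ∈ range m, (q * x⁻¹) ^ (n + 1 + (j:ℤ)) * (q ^ (i+1)) ^ (n - (n + 1 + (j:ℤ))) := by
      apply Finset.sum_nbij' (i := fun r : ℤ => (r - n - 1).toNat)
        (j := fun j : ℕ => n + 1 + (j:ℤ))
      · intro a ha; rw [Finset.mem_Icc] at ha; rw [mem_range]; omega
      · intro a ha; rw [mem_range] at ha; rw [Finset.mem_Icc]; omega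
      · intro a ha; rw [Finset.mem_Icc] at ha; omega
      · intro a ha; rw [mem_range] at ha; omega
      · intro a ha
        rw [Finset.mem_Icc] at ha
        congr 2
        · omega
        · omega
    rw [hconv]
    have hgs := GSc (q * x⁻¹) (q ^ (i+1)) (x * q ^ i) hXne hYne hxt m n hmn
    rw [show (1 - x * q^i) * (-C * ∑ j ∈ range m,
        (q*x⁻¹)^(n+1+(j:ℤ)) * (q^(i+1))^(n - (n+1+(j:ℤ))))
      = -C * ((1 - x * q^i) * ∑ j ∈ range m,
        (q*x⁻¹)^(n+1+(j:ℤ)) * (q^(i+1))^(n - (n+1+(j:ℤ)))) by ring,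
      hgs]
    ring

-- ===== from p10.lean =====

variable {q x : ℂ} {i : ℤ}

theorem heckeF_eq (hq0 : 0 < ‖q‖) (hq : ‖q‖ < 1) (hx : x ≠ 0)
    (hgen : ∀ k : ℤ, 1 - x * q ^ k ≠ 0) (i : ℤ) :
    (1 - x * q ^ i) * heckeF 1 1 1 (q * x⁻¹) (q ^ (i+1)) q
      = ∑' m : ℤ, thetaTerm q x m := by
  have hqne : q ≠ 0 := by intro h; rw [h] at hq0; simp at hq0
  have hρ0 : (0:ℝ) < ‖q‖ := hq0
  have hρ1 : ‖q‖ < 1 := hq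
  have hXne : q * x⁻¹ ≠ 0 := mul_ne_zero hqne (inv_ne_zero hx)
  have hYne : (q : ℂ) ^ (i+1) ≠ 0 := zpow_ne_zero _ hqne
  set RR : ℝ := Mz (q * x⁻¹) * Mz (q ^ (i+1)) with hRR
  have hRR1 : (1:ℝ) ≤ RR := by
    rw [hRR]
    nlinarith [one_le_Mz (q * x⁻¹), one_le_Mz (q ^ (i+1))]
  have hRR0 : (0:ℝ) ≤ RR := le_trans zero_le_one hRR1
  -- the bounding function
  set Fb : ℤ × ℤ → ℝ := fun p =>
    if (0 ≤ p.2 ∧ p.2 ≤ p.1) ∨ (p.1 < p.2 ∧ p.2 < 0) then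
      ‖q‖ ^ (p.1 * (p.1 - 1) / 2) * RR ^ p.1.natAbs else 0 with hFb
  have hFb0 : ∀ p, 0 ≤ Fb p := by
    intro p
    rw [hFb]
    simp only []
    split
    · exact mul_nonneg (zpow_nonneg (norm_nonneg q) _) (pow_nonneg hRR0 _)
    · exact le_rfl
  have hbound : ∀ p : ℤ × ℤ, ‖hkTerm q x i (p.2, p.1 - p.2)‖ ≤ Fb p := by
    rintro ⟨n, r⟩
    simp only []
    by_cases hcond : (0 ≤ r ∧ r ≤ n) ∨ (n < r ∧ r < 0)
    · rw [hk_simp n r, hFb]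
      simp only [if_pos hcond]
      have hr1 : r.natAbs ≤ n.natAbs := by omega
      have hr2 : (n - r).natAbs ≤ n.natAbs := by omega
      have b1 : ‖(q * x⁻¹) ^ r‖ ≤ Mz (q * x⁻¹) ^ n.natAbs := norm_zpow_le _ hXne hr1
      have b2 : ‖(q ^ (i+1)) ^ (n - r)‖ ≤ Mz (q ^ (i+1)) ^ n.natAbs := norm_zpow_le _ hYne hr2
      rw [norm_mul, norm_mul, norm_mul, norm_mul, norm_zpow, norm_zpow, norm_neg, norm_one,
        one_zpow, one_mul]
      calc ‖sg2 r (n - r)‖ * (‖q‖ ^ (n * (n-1)/2) * (‖(q * x⁻¹) ^ r‖ * ‖(q ^ (i+1)) ^ (n - r)‖))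
          ≤ 1 * (‖q‖ ^ (n * (n-1)/2) * (Mz (q * x⁻¹) ^ n.natAbs * Mz (q ^ (i+1)) ^ n.natAbs)) := by
            apply mul_le_mul (sg2_norm_le _ _) _
              (mul_nonneg (zpow_nonneg (norm_nonneg q) _)
                (mul_nonneg (norm_nonneg _) (norm_nonneg _))) zero_le_one
            apply mul_le_mul_of_nonneg_left _ (zpow_nonneg (norm_nonneg q) _)
            apply mul_le_mul b1 b2 (norm_nonneg _)
              (pow_nonneg (le_trans zero_le_one (one_le_Mz _)) _)
        _ = ‖q‖ ^ (n * (n-1)/2) * RR ^ n.natAbs := by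
            rw [one_mul, hRR, mul_pow]
    · have hz : hkTerm q x i (r, n - r) = 0 := by
        rw [hk_simp n r]
        rcases le_or_gt 0 r with h1 | h1
        · rw [sg2_mix1 h1 (by omega), zero_mul]
        · rw [sg2_mix2 (not_le.mpr h1) (by omega), zero_mul]
      rw [hz, norm_zero, hFb]
      simp only [if_neg hcond]
      exact le_rfl
  have hFbsum : Summable Fb := by
    apply (summable_prod_of_nonneg hFb0).mpr
    constructor
    · intro n
      apply summable_of_ne_finset_zero (s := Finset.Icc (min 0 (n+1)) (max n 0))
      intro r hr
      rw [Finset.mem_Icc] at hr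
      rw [hFb]
      simp only []
      rw [if_neg (by omega)]
    · refine Summable.of_nonneg_of_le
        (fun n => tsum_nonneg (fun r => hFb0 (n, r))) (fun n => ?_)
        (master_int hρ0 hρ1 hRR0 0)
      ·
        have hGp : (0:ℝ) ≤ ‖q‖ ^ (n * (n - 1) / 2) * RR ^ n.natAbs :=
          mul_nonneg (zpow_nonneg (norm_nonneg q) _) (pow_nonneg hRR0 _)
        have hts : ∑' r : ℤ, Fb (n, r) = ∑ r ∈ Finset.Icc (min 0 (n+1)) (max n 0), Fb (n, r) := by
          apply tsum_eq_sum
          intro r hr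
          rw [Finset.mem_Icc] at hr
          rw [hFb]
          simp only []
          rw [if_neg (by omega)]
        rw [hts]
        calc ∑ r ∈ Finset.Icc (min 0 (n+1)) (max n 0), Fb (n, r)
            ≤ ∑ r ∈ Finset.Icc (min 0 (n+1)) (max n 0),
                (‖q‖ ^ (n * (n - 1) / 2) * RR ^ n.natAbs) := by
              apply Finset.sum_le_sum
              intro r _
              rw [hFb]
              simp only []
              split
              · exact le_rfl
              · exact hGp
          _ = ((Finset.Icc (min 0 (n+1)) (max n 0)).card : ℝ)
                * (‖q‖ ^ (n * (n - 1) / 2) * RR ^ n.natAbs) := by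
              rw [Finset.sum_const, nsmul_eq_mul]
          _ ≤ ((n.natAbs : ℝ) + 1) * (‖q‖ ^ (n * (n - 1) / 2) * RR ^ n.natAbs) := by
              apply mul_le_mul_of_nonneg_right _ hGp
              have hcard : (Finset.Icc (min 0 (n+1)) (max n 0)).card ≤ n.natAbs + 1 := by
                rw [Int.card_Icc]
                omega
              calc ((Finset.Icc (min 0 (n+1)) (max n 0)).card : ℝ)
                  ≤ ((n.natAbs + 1 : ℕ) : ℝ) := by exact_mod_cast hcard
                _ = (n.natAbs : ℝ) + 1 := by push_cast; ring
          _ = ((n.natAbs : ℝ) + 1) * ‖q‖ ^ (n * (n - 1) / 2 + 0 * n) * RR ^ n.natAbs := by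
              rw [show n * (n - 1) / 2 + 0 * n = n * (n - 1) / 2 by ring]
              ring
  have hg : Summable (fun p : ℤ × ℤ => hkTerm q x i (p.2, p.1 - p.2)) :=
    Summable.of_norm_bounded hFbsum hbound
  -- reindex
  have hre : heckeF 1 1 1 (q * x⁻¹) (q ^ (i+1)) q
      = ∑' p : ℤ × ℤ, hkTerm q x i (p.2, p.1 - p.2) := by
    have h1 : heckeF 1 1 1 (q * x⁻¹) (q ^ (i+1)) q = ∑' p : ℤ × ℤ, hkTerm q x i p := rfl
    rw [h1]
    exact (Equiv.tsum_eq
      ⟨fun p : ℤ × ℤ => ((p.2, p.1 - p.2) : ℤ × ℤ),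
       fun p : ℤ × ℤ => ((p.1 + p.2, p.1) : ℤ × ℤ),
       fun p => by simp, fun p => by simp⟩ (hkTerm q x i)).symm
  have hfub : ∑' p : ℤ × ℤ, hkTerm q x i (p.2, p.1 - p.2)
      = ∑' n : ℤ, ∑' r : ℤ, hkTerm q x i (r, n - r) :=
    hg.tsum_prod
  -- the two pieces
  set u : ℤ → ℂ := thetaTerm q (q * x⁻¹) with hu_def
  set w : ℤ → ℂ := fun n => (-1:ℂ) ^ n * q ^ (n * (n - 1) / 2 + (i+1) * n) with hw_def
  have hv : ∀ n : ℤ, (-1:ℂ) ^ n * q ^ (n * (n - 1) / 2)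
      * ((q * x⁻¹) ^ n - (q * x⁻¹) ^ (-1 : ℤ) * (q ^ (i+1)) ^ (n+1))
      = u n - (x * q ^ i) * w n := by
    intro n
    rw [hu_def, hw_def, thetaTerm]
    simp only []
    rw [zpow_neg_one, mul_inv, inv_inv, ← zpow_mul q (i+1) (n+1)]
    have key : q ^ (n*(n-1)/2) * ((q:ℂ)⁻¹ * (q ^ ((i+1)*(n+1))))
        = q ^ i * q ^ (n*(n-1)/2 + (i+1)*n) := by
      rw [← zpow_neg_one q, ← zpow_add₀ hqne, ← zpow_add₀ hqne, ← zpow_add₀ hqne]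
      congr 1
      ring
    linear_combination (-((-1:ℂ) ^ n * x)) * key
  have hu : Summable u := by
    apply Summable.of_norm_bounded (master_int hρ0 hρ1
      (le_trans zero_le_one (one_le_Mz (q * x⁻¹))) 0)
    intro n
    exact norm_thetaTerm_le hqne hXne n
  have hw : Summable w := by
    apply Summable.of_norm_bounded (master_int hρ0 hρ1 zero_le_one (i+1))
    intro n
    rw [hw_def]
    simp only []
    rw [norm_mul, norm_zpow, norm_zpow, norm_neg, norm_one, one_zpow, one_mul, one_pow,
      mul_one]
    have h4 : (0:ℝ) ≤ ‖q‖ ^ (n * (n - 1) / 2 + (i+1) * n) := zpow_nonneg (norm_nonneg q) _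
    nlinarith [Nat.cast_nonneg (α := ℝ) n.natAbs]
  -- sum of w vanishes by pairing
  have hw0 : ∑' n : ℤ, w n = 0 := by
    have hpair : ∀ n : ℤ, w (-(2*i+1) - n) = - w n := by
      intro n
      rw [hw_def]
      simp only []
      have hsgn : (-1:ℂ) ^ (-(2*i+1) - n) = -((-1:ℂ) ^ n) := by
        rw [show -(2*i+1) - n = -((2*i+1) + n) by ring, neg_one_zpow_neg,
          zpow_add₀ (by norm_num : (-1:ℂ) ≠ 0), zpow_add₀ (by norm_num : (-1:ℂ) ≠ 0),
          zpow_mul]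
        norm_num
      have hexp : (-(2*i+1) - n) * ((-(2*i+1) - n) - 1) / 2 + (i+1) * (-(2*i+1) - n)
          = n * (n - 1) / 2 + (i+1) * n := by
        have h1 := hf_half n
        have h2 := hf_half (-(2*i+1) - n)
        have h3 : (-(2*i+1) - n) * ((-(2*i+1) - n) - 1)
            = n * (n-1) + 4 * (n * (i+1)) + 2 * ((2*i+1) * (i+1)) := by ring
        have h4 : (i+1) * (-(2*i+1) - n) = -((2*i+1) * (i+1)) - n * (i+1) := by ring
        have h5 : (i+1) * n = n * (i+1) := by ring
        linarith
      rw [hsgn, hexp]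
      ring
    have hEq := (Equiv.subLeft (-(2*i+1))).tsum_eq w
    have h1 : ∀ c : ℤ, w ((Equiv.subLeft (-(2*i+1))) c) = - w c := by
      intro c
      rw [Equiv.subLeft_apply]
      exact hpair c
    rw [tsum_congr h1, tsum_neg] at hEq
    have h2 : (∑' n : ℤ, w n) + (∑' n : ℤ, w n) = 0 := by linear_combination - hEq
    exact add_self_eq_zero.mp h2
  -- sum of u is the theta series
  have husum : ∑' n : ℤ, u n = ∑' m : ℤ, thetaTerm q x m := by
    have hEq := (Equiv.neg ℤ).tsum_eq u
    rw [← hEq]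
    apply tsum_congr
    intro c
    rw [Equiv.neg_apply]
    rw [hu_def, thetaTerm, thetaTerm]
    have h1 : (q * x⁻¹) ^ (-c : ℤ) = q ^ (-c : ℤ) * x ^ c := by
      rw [mul_zpow, inv_zpow, ← zpow_neg, neg_neg]
    rw [h1, neg_one_zpow_neg]
    have key : q ^ ((-c) * ((-c) - 1) / 2) * (q:ℂ) ^ (-c : ℤ) = q ^ (c * (c - 1) / 2) := by
      rw [← zpow_add₀ hqne]
      congr 1
      have h2 := hf_half c
      have h3 := hf_half (-c)
      have h4 : (-c) * ((-c) - 1) = c * (c - 1) + 2 * c := by ring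
      linarith
    linear_combination ((-1:ℂ) ^ c * x ^ c) * key
  -- assemble
  rw [hre, hfub, ← tsum_mul_left]
  have hstep : ∀ n : ℤ, (1 - x * q ^ i) * (∑' r : ℤ, hkTerm q x i (r, n - r))
      = u n - (x * q ^ i) * w n := by
    intro n
    rw [claimA hqne hx n, hv n]
  rw [tsum_congr hstep, Summable.tsum_sub hu (hw.mul_left _), tsum_mul_left, hw0, mul_zero,
    sub_zero, husum]

theorem stmt11 (q x : ℂ) (hq0 : 0 < ‖q‖) (hq : ‖q‖ < 1) (hx : x ≠ 0)
    (hgen : ∀ k : ℤ, 1 - x * q ^ k ≠ 0) (i : ℤ) :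
    Theta x q / (1 - x * q ^ i) = heckeF 1 1 1 (q * x⁻¹) (q ^ (i + 1)) q := by
  have ht : (1 - x * q ^ i) ≠ 0 := hgen i
  rw [div_eq_iff ht, JTP hq0 hq hx hgen, ← heckeF_eq hq0 hq hx hgen i]
  ring
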